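/- For all real θ with 0 < θ < π and all positive reals a, b, one has arcsin(cosh(a)/cosh(z)) = arctan( sin(θ/2)·cosh(a) / (cos(θ/2)·cosh(a) + cosh(b)) ), where z > 0 is defined by cosh²(z) = (cosh²(a) + cosh²(b) + 2cos(θ/2)cosh(a)cosh(b)) / sin²(θ/2). -/

import Mathlib

open Real

theorem stmt_0 (θ a b z : ℝ) (hθ0 : 0 < θ) (hθπ : θ < Real.pi)
    (ha : 0 < a) (hb : 0 < b) (hz : 0 < z)
    (hrel : Real.cosh z ^ 2 * Real.sin (θ / 2) ^ 2 =
      Real.cosh a ^ 2 + Real.cosh b ^ 2 +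
        2 * Real.cos (θ / 2) * Real.cosh a * Real.cosh b) :
    Real.arcsin (Real.cosh a / Real.cosh z) =
      Real.arctan (Real.sin (θ / 2) * Real.cosh a /
        (Real.cos (θ / 2) * Real.cosh a + Real.cosh b)) := by
  set A := Real.cosh a with hA
  set B := Real.cosh b with hB
  set Z := Real.cosh z with hZ
  set s := Real.sin (θ / 2) with hs
  set c := Real.cos (θ / 2) with hc
  have hApos : 0 < A := Real.cosh_pos a
  have hBpos : 0 < B := Real.cosh_pos b
  have hZpos : 0 < Z := Real.cosh_pos z
  have hspos : 0 < s := Real.sin_pos_of_pos_of_lt_pi (by linarith) (by linarith [Real.pi_pos])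
  have hcpos : 0 < c := Real.cos_pos_of_mem_Ioo ⟨by linarith [Real.pi_pos], by linarith⟩
  have hsc : s ^ 2 + c ^ 2 = 1 := Real.sin_sq_add_cos_sq _
  have hden : 0 < c * A + B := by positivity
  have hkey : Z ^ 2 - A ^ 2 = ((c * A + B) / (s * Z))^2 * Z ^ 2 := by
    field_simp
    linear_combination hrel - A^2*hsc
  have hAZ : A < Z := by
    have h0 : 0 < Z ^ 2 - A ^ 2 := by rw [hkey]; positivity
    nlinarith
  have hmem : A / Z ∈ Set.Ioo (-(1:ℝ)) 1 := by
    constructor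
    · have : 0 < A / Z := by positivity
      linarith
    · exact (div_lt_one hZpos).mpr hAZ
  rw [Real.arcsin_eq_arctan hmem]
  congr 1
  have h1 : 1 - (A / Z) ^ 2 = ((c * A + B) / (s * Z)) ^ 2 := by
    field_simp
    linear_combination hrel - A^2*hsc
  rw [h1, Real.sqrt_sq (by positivity)]
  field_simp
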